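/- Let F be a free group with basis {g_j : j ∈ J}, K ⊆ J, F_K = ⟨g_j : j ∈ K⟩, N a normal subgroup of F, 𝔑 = ℤ[F]·(N−1), and v ∈ F. Then D_k(v) ≡ 0 mod 𝔑 for all k ∈ J \ K if and only if v ∈ F_K · (F_K ∩ N)^F · [N, N], where (F_K ∩ N)^F is the normal closure of F_K ∩ N in F. -/

import Mathlib

open MonoidAlgebra

/-- The augmentation homomorphism `ℤ[F] → ℤ`. -/
noncomputable def aug (J : Type) : MonoidAlgebra ℤ (FreeGroup J) →ₐ[ℤ] ℤ :=
  MonoidAlgebra.lift ℤ ℤ (FreeGroup J) 1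

/-- `D` is the Fox derivative of `ℤ[FreeGroup J]` with respect to the generator `k`. -/
structure IsFoxDeriv (J : Type) [DecidableEq J] (k : J)
    (D : MonoidAlgebra ℤ (FreeGroup J) → MonoidAlgebra ℤ (FreeGroup J)) : Prop where
  map_add : ∀ u v, D (u + v) = D u + D v
  leibniz : ∀ u v, D (u * v) = D u * v + aug J u • D v
  on_gen : ∀ j : J, D (MonoidAlgebra.of ℤ (FreeGroup J) (FreeGroup.of j)) =
      if k = j then 1 else 0

namespace Kras

set_option linter.unusedSectionVars false
set_option linter.unnecessarySimpa false
variable {J : Type} [DecidableEq J]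

noncomputable def og : FreeGroup J → MonoidAlgebra ℤ (FreeGroup J) :=
  fun f => MonoidAlgebra.of ℤ (FreeGroup J) f

lemma og_mul (a b : FreeGroup J) : og (a * b) = og a * og b := map_mul _ _ _
lemma og_one : og (1 : FreeGroup J) = 1 := map_one (MonoidAlgebra.of ℤ (FreeGroup J))

lemma og_inv_mul (a : FreeGroup J) : og a⁻¹ * og a = 1 := by
  rw [← og_mul, inv_mul_cancel, og_one]
lemma og_mul_inv (a : FreeGroup J) : og a * og a⁻¹ = 1 := by
  rw [← og_mul, mul_inv_cancel, og_one]

lemma aug_og (f : FreeGroup J) : aug J (og f) = 1 := by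
  simpa [aug, og] using MonoidAlgebra.lift_of (R := ℤ) (1 : FreeGroup J →* ℤ) f

section D
variable {k : J} {Dk : MonoidAlgebra ℤ (FreeGroup J) → MonoidAlgebra ℤ (FreeGroup J)}
  (h : IsFoxDeriv J k Dk)

/-- `Dk` as an additive monoid hom. -/
noncomputable def Dhom : MonoidAlgebra ℤ (FreeGroup J) →+ MonoidAlgebra ℤ (FreeGroup J) :=
  AddMonoidHom.mk' Dk h.map_add

@[simp] lemma Dhom_apply (x) : Dhom h x = Dk x := rfl

include h

lemma D_zero : Dk 0 = 0 := map_zero (Dhom h)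
lemma D_neg (x) : Dk (-x) = - Dk x := map_neg (Dhom h) x
lemma D_sub (x y) : Dk (x - y) = Dk x - Dk y := map_sub (Dhom h) x y
lemma D_add (x y) : Dk (x + y) = Dk x + Dk y := h.map_add x y
lemma D_zsmul (c : ℤ) (x) : Dk (c • x) = c • Dk x := map_zsmul (Dhom h) c x

set_option linter.unusedSectionVars false

lemma D_one : Dk 1 = 0 := by
  have h1 := h.leibniz 1 1
  simp only [mul_one, one_mul, map_one, one_smul] at h1
  have : Dk 1 + Dk 1 - Dk 1 = Dk 1 - Dk 1 := by rw [← h1]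
  simpa using this

lemma D_og_mul_left (a : FreeGroup J) (x) : Dk (og a * x) = Dk (og a) * x + Dk x := by
  rw [h.leibniz, aug_og, one_smul]

lemma D_og_mul (a b : FreeGroup J) : Dk (og (a * b)) = Dk (og a) * og b + Dk (og b) := by
  rw [og_mul, D_og_mul_left h]

lemma D_og_inv (a : FreeGroup J) : Dk (og a⁻¹) = -(Dk (og a) * og a⁻¹) := by
  have h1 := D_og_mul h a a⁻¹
  rw [mul_inv_cancel, og_one, D_one h] at h1
  have : Dk (og a) * og a⁻¹ + Dk (og a⁻¹) - Dk (og a) * og a⁻¹ = 0 - Dk (og a) * og a⁻¹ := by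
    rw [← h1]
  simpa using this

end D

-- basic single lemma
lemma og_eq_single (f : FreeGroup J) : og f = MonoidAlgebra.single f (1:ℤ) := rfl

lemma single_eq_smul_og (f : FreeGroup J) (c : ℤ) :
    MonoidAlgebra.single f c = c • og f := by
  rw [og_eq_single, MonoidAlgebra.smul_single, smul_eq_mul, mul_one]

/-- induction principle over the group-element basis -/
lemma og_induction {p : MonoidAlgebra ℤ (FreeGroup J) → Prop}
    (x : MonoidAlgebra ℤ (FreeGroup J)) (h0 : p 0) (hog : ∀ f, p (og f))
    (hadd : ∀ x y, p x → p y → p (x + y)) (hsmul : ∀ (c : ℤ) x, p x → p (c • x)) : p x := by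
  refine MonoidAlgebra.induction_linear x h0 (fun a b ha hb => hadd _ _ ha hb) ?_
  intro a b
  rw [show (MonoidAlgebra.single a b : MonoidAlgebra ℤ (FreeGroup J)) = b • og a from
    single_eq_smul_og a b]
  exact hsmul _ _ (hog a)

lemma mul_og_eq_mapDomain (x : MonoidAlgebra ℤ (FreeGroup J)) (g : FreeGroup J) :
    x * og g = MonoidAlgebra.mapDomain (· * g) x := by
  induction x using og_induction with
  | h0 => simp [MonoidAlgebra.mapDomain_zero]
  | hog f => rw [← og_mul]; simp [og_eq_single, MonoidAlgebra.mapDomain_single,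
      MonoidAlgebra.single_mul_single]
  | hadd x y hx hy => rw [add_mul, hx, hy, MonoidAlgebra.mapDomain_add]
  | hsmul c x hx => rw [smul_mul_assoc, hx, MonoidAlgebra.mapDomain_smul]

lemma mem_span_og_of_support {S : Set (FreeGroup J)} (x : MonoidAlgebra ℤ (FreeGroup J))
    (h : ∀ f ∈ x.coeff.support, f ∈ S) : x ∈ Submodule.span ℤ (og '' S) := by
  have hx : x = ∑ a ∈ x.coeff.support, MonoidAlgebra.single a (x.coeff a) := by
    apply MonoidAlgebra.coeff_injective
    rw [MonoidAlgebra.coeff_sum]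
    exact (Finsupp.sum_single x.coeff).symm
  rw [hx]
  refine Submodule.sum_mem _ (fun a ha => ?_)
  rw [single_eq_smul_og]
  exact Submodule.smul_mem _ _ (Submodule.subset_span ⟨a, h a ha, rfl⟩)

section NI
variable (N : Subgroup (FreeGroup J))

noncomputable def NI : Submodule (MonoidAlgebra ℤ (FreeGroup J)) (MonoidAlgebra ℤ (FreeGroup J)) :=
  Submodule.span (MonoidAlgebra ℤ (FreeGroup J)) ((fun n => og n - 1) '' (N : Set (FreeGroup J)))

variable {N}

lemma og_sub_one_mem {n : FreeGroup J} (hn : n ∈ N) : og n - 1 ∈ NI N :=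
  Submodule.subset_span ⟨n, hn, rfl⟩

lemma NI_mul_left (x : MonoidAlgebra ℤ (FreeGroup J)) {y} (hy : y ∈ NI N) : x * y ∈ NI N := by
  simpa [smul_eq_mul] using Submodule.smul_mem (NI N) x hy

lemma NI_mul_og_right (hN : N.Normal) {y} (hy : y ∈ NI N) (g : FreeGroup J) :
    y * og g ∈ NI N := by
  induction hy using Submodule.span_induction with
  | mem z hz =>
    obtain ⟨n, hn, rfl⟩ := hz
    have : (og n - 1) * og g = og g * (og (g⁻¹ * n * g) - 1) := by
      rw [sub_mul, one_mul, mul_sub, mul_one, ← og_mul, ← og_mul]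
      congr 2
      group
    rw [this]
    exact NI_mul_left _ (og_sub_one_mem (by simpa using hN.conj_mem n hn g⁻¹))
  | zero => rw [zero_mul]; exact Submodule.zero_mem _
  | add a b _ _ ha hb => rw [add_mul]; exact Submodule.add_mem _ ha hb
  | smul a x _ hx => rw [smul_eq_mul, mul_assoc]; exact NI_mul_left _ hx

end NI


lemma D_gen {k : J} {Dk} (h : IsFoxDeriv J k Dk) (x : J) :
    Dk (og (FreeGroup.of x)) = if k = x then 1 else 0 := h.on_gen x

variable {D : J → MonoidAlgebra ℤ (FreeGroup J) → MonoidAlgebra ℤ (FreeGroup J)}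

/-- The fundamental formula of Fox calculus. -/
lemma FF (hD : ∀ k, IsFoxDeriv J k (D k)) (v : FreeGroup J) :
    ∃ s : Finset J, (∀ j ∉ s, D j (og v) = 0) ∧
      og v - 1 = ∑ j ∈ s, (og (FreeGroup.of j) - 1) * D j (og v) := by
  induction v using FreeGroup.induction_on with
  | C1 =>
    exact ⟨∅, fun j _ => by rw [og_one]; exact D_one (hD j), by simp [og_one]⟩
  | of x =>
    refine ⟨{x}, fun j hj => ?_, ?_⟩
    · rw [D_gen (hD j), if_neg (by simpa using hj)]
    · rw [Finset.sum_singleton, D_gen (hD x), if_pos rfl, mul_one]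
  | inv_of x _ =>
    refine ⟨{x}, fun j hj => ?_, ?_⟩
    · rw [D_og_inv (hD j), D_gen (hD j), if_neg (by simpa using hj), zero_mul, neg_zero]
    · rw [Finset.sum_singleton, D_og_inv (hD x), D_gen (hD x), if_pos rfl, one_mul]
      have h2 : og (FreeGroup.of x) * og ((FreeGroup.of x)⁻¹) = 1 := by
        rw [← og_mul, mul_inv_cancel, og_one]
      rw [mul_neg, sub_mul, one_mul, h2]
      abel
  | mul x y ihx ihy =>
    obtain ⟨s1, h1, e1⟩ := ihx
    obtain ⟨s2, h2, e2⟩ := ihy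
    refine ⟨s1 ∪ s2, fun j hj => ?_, ?_⟩
    · rw [D_og_mul (hD j), h1 j (fun hc => hj (Finset.mem_union_left _ hc)),
        h2 j (fun hc => hj (Finset.mem_union_right _ hc)), zero_mul, zero_add]
    · have E1 : ∑ j ∈ s1 ∪ s2, (og (FreeGroup.of j) - 1) * D j (og x) = og x - 1 := by
        rw [e1]
        exact (Finset.sum_subset Finset.subset_union_left
          (fun j _ hj => by rw [h1 j hj, mul_zero])).symm
      have E2 : ∑ j ∈ s1 ∪ s2, (og (FreeGroup.of j) - 1) * D j (og y) = og y - 1 := by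
        rw [e2]
        exact (Finset.sum_subset Finset.subset_union_right
          (fun j _ hj => by rw [h2 j hj, mul_zero])).symm
      have key : ∀ j ∈ s1 ∪ s2, (og (FreeGroup.of j) - 1) * D j (og (x * y)) =
          (og (FreeGroup.of j) - 1) * D j (og x) * og y +
            (og (FreeGroup.of j) - 1) * D j (og y) := by
        intro j _
        rw [D_og_mul (hD j)]
        noncomm_ring
      rw [Finset.sum_congr rfl key, Finset.sum_add_distrib, ← Finset.sum_mul, E1, E2, og_mul]
      noncomm_ring


section Sigma
variable {N : Subgroup (FreeGroup J)}
variable (N)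

noncomputable def nuN : FreeGroup J → Additive (Abelianization ↥N) := fun f =>
  Additive.ofMul (Abelianization.of
    ⟨((QuotientGroup.mk f : FreeGroup J ⧸ N)).out⁻¹ * f, by
      have h1 : (QuotientGroup.mk (((QuotientGroup.mk f : FreeGroup J ⧸ N)).out) :
          FreeGroup J ⧸ N) = QuotientGroup.mk f := QuotientGroup.out_eq' _
      exact QuotientGroup.eq.mp h1⟩)

noncomputable def sigmaN : MonoidAlgebra ℤ (FreeGroup J) →ₗ[ℤ] Additive (Abelianization ↥N) :=
  (Finsupp.lift _ ℤ _ (nuN N)).comp (MonoidAlgebra.coeffLinearEquiv ℤ).toLinearMap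

variable {N}

noncomputable def clsN {n : FreeGroup J} (hn : n ∈ N) : Additive (Abelianization ↥N) :=
  Additive.ofMul (Abelianization.of ⟨n, hn⟩)

lemma sigma_og (f : FreeGroup J) : sigmaN N (og f) = nuN N f := by
  show Finsupp.lift _ ℤ _ (nuN N) (Finsupp.single f 1) = _
  erw [Finsupp.lift_apply]
  rw [Finsupp.sum_single_index (by simp), one_smul]

lemma nu_mul_mem (f n : FreeGroup J) (hn : n ∈ N) : nuN N (f * n) = nuN N f + clsN hn := by
  have h1 : (QuotientGroup.mk (f * n) : FreeGroup J ⧸ N) = QuotientGroup.mk f :=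
    ((QuotientGroup.eq).mpr (by simpa using hn)).symm
  have e1 : ((QuotientGroup.mk (f * n) : FreeGroup J ⧸ N)).out =
      ((QuotientGroup.mk f : FreeGroup J ⧸ N)).out := by rw [h1]
  simp only [nuN, clsN]
  rw [← ofMul_mul, ← map_mul]
  congr 1
  congr 1
  apply Subtype.ext
  show ((QuotientGroup.mk (f * n) : FreeGroup J ⧸ N)).out⁻¹ * (f * n) =
    (((QuotientGroup.mk f : FreeGroup J ⧸ N)).out⁻¹ * f) * n
  rw [e1, mul_assoc]

lemma sigma_mul_sub {n : FreeGroup J} (hn : n ∈ N) (x : MonoidAlgebra ℤ (FreeGroup J)) :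
    sigmaN N (x * (og n - 1)) = aug J x • clsN hn := by
  induction x using og_induction with
  | h0 => simp
  | hog f =>
    rw [mul_sub, mul_one, ← og_mul, map_sub, sigma_og, sigma_og, nu_mul_mem f n hn, aug_og,
      one_smul]
    abel
  | hadd x y hx hy => rw [add_mul, map_add, hx, hy, map_add, add_smul]
  | hsmul c x hx => rw [smul_mul_assoc, map_smul, hx, map_smul, smul_assoc]

lemma sigma_og_sub_one {n : FreeGroup J} (hn : n ∈ N) : sigmaN N (og n - 1) = clsN hn := by
  have := sigma_mul_sub hn 1
  rwa [one_mul, map_one, one_smul] at this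

lemma sigma_NI {y} (hy : y ∈ NI N) (x : MonoidAlgebra ℤ (FreeGroup J)) :
    sigmaN N (x * y) = aug J x • sigmaN N y := by
  induction hy using Submodule.span_induction generalizing x with
  | mem z hz =>
    obtain ⟨n, hn, rfl⟩ := hz
    rw [sigma_mul_sub hn, sigma_og_sub_one hn]
  | zero => simp
  | add a b _ _ ha hb => rw [mul_add, map_add, ha, hb, map_add, smul_add]
  | smul a z _ hz =>
    rw [smul_eq_mul, ← mul_assoc, hz, hz, map_mul, mul_smul]

/-- If all Fox derivatives of `n ∈ N` lie in `𝔑` then `n ∈ [N,N]`. -/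
lemma mem_commutator_of_D {D : J → MonoidAlgebra ℤ (FreeGroup J) → MonoidAlgebra ℤ (FreeGroup J)}
    (hD : ∀ k, IsFoxDeriv J k (D k)) {n : FreeGroup J} (hn : n ∈ N)
    (hder : ∀ j, D j (og n) ∈ NI N) : n ∈ ⁅N, N⁆ := by
  obtain ⟨s, _, e⟩ := FF hD n
  have h0 : sigmaN N (og n - 1) = 0 := by
    rw [e, map_sum]
    refine Finset.sum_eq_zero (fun j _ => ?_)
    rw [sigma_NI (hder j), map_sub, aug_og, map_one, sub_self, zero_smul]
  rw [sigma_og_sub_one hn] at h0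
  have h2 : Abelianization.of (⟨n, hn⟩ : ↥N) = 1 := by
    have := ofMul_eq_zero.mp h0
    exact this
  have h3 : (⟨n, hn⟩ : ↥N) ∈ commutator ↥N := by
    have := (QuotientGroup.eq_one_iff (⟨n, hn⟩ : ↥N)).mp h2
    exact this
  have h4 : N.subtype ⟨n, hn⟩ ∈ Subgroup.map N.subtype (commutator ↥N) :=
    Subgroup.mem_map_of_mem _ h3
  rw [commutator_def, Subgroup.map_commutator] at h4
  have h5 : Subgroup.map N.subtype ⊤ = N := by
    rw [← MonoidHom.range_eq_map, Subgroup.range_subtype]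
  rwa [h5] at h4

end Sigma

section Helpers
variable {N : Subgroup (FreeGroup J)} {k : J}
  {Dk : MonoidAlgebra ℤ (FreeGroup J) → MonoidAlgebra ℤ (FreeGroup J)}

lemma D_FK_eq_zero {K : Set J} (h : IsFoxDeriv J k Dk) (hk : k ∉ K) {a : FreeGroup J}
    (ha : a ∈ Subgroup.closure (FreeGroup.of '' K)) : Dk (og a) = 0 := by
  induction ha using Subgroup.closure_induction with
  | mem x hx =>
    obtain ⟨j, hj, rfl⟩ := hx
    rw [D_gen h, if_neg (show ¬ k = j from fun hc => by subst hc; exact hk hj)]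
  | one => rw [og_one]; exact D_one h
  | mul x y _ _ hx hy => rw [D_og_mul h, hx, hy, zero_mul, zero_add]
  | inv x _ hx => rw [D_og_inv h, hx, zero_mul, neg_zero]

lemma Dcong_mul (h : IsFoxDeriv J k Dk) (m₁ : FreeGroup J) {m₂ : FreeGroup J} (h2 : m₂ ∈ N) :
    Dk (og (m₁ * m₂)) - (Dk (og m₁) + Dk (og m₂)) ∈ NI N := by
  have : Dk (og (m₁ * m₂)) - (Dk (og m₁) + Dk (og m₂)) = Dk (og m₁) * (og m₂ - 1) := by
    rw [D_og_mul h]; noncomm_ring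
  rw [this]
  exact NI_mul_left _ (og_sub_one_mem h2)

lemma Dcong_inv (h : IsFoxDeriv J k Dk) {m : FreeGroup J} (hm : m ∈ N) :
    Dk (og m⁻¹) + Dk (og m) ∈ NI N := by
  have : Dk (og m⁻¹) + Dk (og m) = Dk (og m) * (-(og m⁻¹ - 1)) := by
    rw [D_og_inv h]; noncomm_ring
  rw [this]
  exact NI_mul_left _ (Submodule.neg_mem _ (og_sub_one_mem (inv_mem hm)))

lemma Dcong_zpow (h : IsFoxDeriv J k Dk) {m : FreeGroup J} (hm : m ∈ N) (c : ℤ) :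
    Dk (og (m ^ c)) - c • Dk (og m) ∈ NI N := by
  induction c using Int.induction_on with
  | zero => simp only [zpow_zero, og_one, D_one h, zero_smul, sub_zero]; exact Submodule.zero_mem _
  | succ i hi =>
    have e : m ^ ((i : ℤ) + 1) = m ^ (i : ℤ) * m := by rw [zpow_add, zpow_one]
    have h1 := Dcong_mul (N := N) h (m ^ (i : ℤ)) hm
    have : Dk (og (m ^ ((i:ℤ)+1))) - ((i:ℤ)+1) • Dk (og m) =
        (Dk (og (m ^ (i:ℤ) * m)) - (Dk (og (m ^ (i:ℤ))) + Dk (og m))) +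
          (Dk (og (m ^ (i:ℤ))) - (i:ℤ) • Dk (og m)) := by
      rw [e, add_smul, one_smul]; abel
    rw [this]
    exact Submodule.add_mem _ h1 hi
  | pred i hi =>
    have e : m ^ (-(i : ℤ) - 1) = m ^ (-(i : ℤ)) * m⁻¹ := by
      rw [← zpow_neg_one, ← zpow_add]; ring_nf
    have h1 := Dcong_mul (N := N) h (m ^ (-(i : ℤ))) (inv_mem hm)
    have h2 := Dcong_inv (N := N) h hm
    have : Dk (og (m ^ (-(i:ℤ)-1))) - (-(i:ℤ)-1) • Dk (og m) =
        (Dk (og (m ^ (-(i:ℤ)) * m⁻¹)) - (Dk (og (m ^ (-(i:ℤ)))) + Dk (og m⁻¹))) +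
          (Dk (og (m ^ (-(i:ℤ)))) - (-(i:ℤ)) • Dk (og m)) + (Dk (og m⁻¹) + Dk (og m)) := by
      rw [e, sub_smul, one_smul]; abel
    rw [this]
    exact Submodule.add_mem _ (Submodule.add_mem _ h1 hi) h2

lemma Dcong_conj (h : IsFoxDeriv J k Dk) (hN : N.Normal) {m : FreeGroup J} (hm : m ∈ N)
    (t : FreeGroup J) : Dk (og (t⁻¹ * m * t)) - Dk (og m) * og t ∈ NI N := by
  have hmem : t⁻¹ * m * t ∈ N := by simpa using hN.conj_mem m hm t⁻¹
  have e1 : og (t⁻¹ * m * t) = og t⁻¹ * og (m * t) := by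
    rw [← og_mul, mul_assoc]
  have e2 : Dk (og (t⁻¹ * m * t)) = Dk (og t⁻¹) * og (m * t) + Dk (og (m * t)) := by
    rw [e1, D_og_mul_left h]
  have e3 : Dk (og (m * t)) = Dk (og m) * og t + Dk (og t) := D_og_mul h m t
  have e4 : og t⁻¹ * og (m * t) = og (t⁻¹ * m * t) := by rw [← og_mul, mul_assoc]
  have : Dk (og (t⁻¹ * m * t)) - Dk (og m) * og t =
      -(Dk (og t) * (og (t⁻¹ * m * t) - 1)) := by
    rw [e2, D_og_inv h, e3, ← e4]; noncomm_ring
  rw [this]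
  exact Submodule.neg_mem _ (NI_mul_left _ (og_sub_one_mem hmem))

lemma Dcong_list (h : IsFoxDeriv J k Dk) (L : List (FreeGroup J)) (hL : ∀ m ∈ L, m ∈ N) :
    Dk (og L.prod) - (L.map (fun m => Dk (og m))).sum ∈ NI N := by
  induction L with
  | nil =>
    simp only [List.prod_nil, og_one, D_one h, List.map_nil, List.sum_nil, sub_zero]
    exact Submodule.zero_mem _
  | cons m L ih =>
    have hm : m ∈ N := hL m List.mem_cons_self
    have hLP : L.prod ∈ N := Subgroup.list_prod_mem _ (fun x hx => hL x (List.mem_cons_of_mem _ hx))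
    have h1 := Dcong_mul (N := N) h m hLP
    have : Dk (og (m * L.prod)) - ((List.map (fun m => Dk (og m)) (m :: L)).sum) =
        (Dk (og (m * L.prod)) - (Dk (og m) + Dk (og L.prod))) +
          (Dk (og L.prod) - (L.map (fun m => Dk (og m))).sum) := by
      rw [List.map_cons, List.sum_cons]; abel
    rw [List.prod_cons, this]
    exact Submodule.add_mem _ h1 (ih (fun x hx => hL x (List.mem_cons_of_mem _ hx)))

end Helpers

section Backward
variable {N : Subgroup (FreeGroup J)} {K : Set J}
  {D : J → MonoidAlgebra ℤ (FreeGroup J) → MonoidAlgebra ℤ (FreeGroup J)}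

/-- the subgroup of elements all of whose `k ∉ K` Fox derivatives lie in `𝔑`. -/
noncomputable def Hsub (hD : ∀ k, IsFoxDeriv J k (D k)) (hN : N.Normal) (K : Set J) :
    Subgroup (FreeGroup J) where
  carrier := {v | ∀ k ∉ K, D k (og v) ∈ NI N}
  one_mem' := by
    intro k _
    rw [og_one, D_one (hD k)]
    exact Submodule.zero_mem _
  mul_mem' := by
    intro a b ha hb k hk
    rw [D_og_mul (hD k)]
    exact Submodule.add_mem _ (NI_mul_og_right hN (ha k hk) b) (hb k hk)
  inv_mem' := by
    intro a ha k hk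
    rw [D_og_inv (hD k)]
    exact Submodule.neg_mem _ (NI_mul_og_right hN (ha k hk) a⁻¹)

lemma mem_Hsub_iff (hD : ∀ k, IsFoxDeriv J k (D k)) (hN : N.Normal) {v : FreeGroup J} :
    v ∈ Hsub hD hN K ↔ ∀ k ∉ K, D k (og v) ∈ NI N := Iff.rfl

lemma FK_le_Hsub (hD : ∀ k, IsFoxDeriv J k (D k)) (hN : N.Normal) :
    Subgroup.closure (FreeGroup.of '' K) ≤ Hsub hD hN K := by
  intro a ha k hk
  rw [D_FK_eq_zero (hD k) hk ha]
  exact Submodule.zero_mem _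

lemma ncl_le_Hsub (hD : ∀ k, IsFoxDeriv J k (D k)) (hN : N.Normal) :
    Subgroup.normalClosure ((Subgroup.closure (FreeGroup.of '' K) ⊓ N :
      Subgroup (FreeGroup J)) : Set (FreeGroup J)) ≤ Hsub hD hN K := by
  rw [Subgroup.normalClosure]
  rw [Subgroup.closure_le]
  rintro x hx k hk
  rw [Group.mem_conjugatesOfSet_iff] at hx
  obtain ⟨μ, hμ, hconj⟩ := hx
  obtain ⟨g, rfl⟩ := isConj_iff.mp hconj
  have hμK : μ ∈ Subgroup.closure (FreeGroup.of '' K) := hμ.1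
  have hμN : μ ∈ N := hμ.2
  have hD0 : D k (og μ) = 0 := D_FK_eq_zero (hD k) hk hμK
  have e1 : og (g * μ * g⁻¹) = og g * og (μ * g⁻¹) := by rw [← og_mul, mul_assoc]
  have e2 : D k (og (g * μ * g⁻¹)) = D k (og g) * og (μ * g⁻¹) + D k (og (μ * g⁻¹)) := by
    rw [e1, D_og_mul_left (hD k)]
  have e3 : D k (og (μ * g⁻¹)) = D k (og μ) * og g⁻¹ + D k (og g⁻¹) := D_og_mul (hD k) μ g⁻¹
  have key : D k (og (g * μ * g⁻¹)) = D k (og g) * ((og μ - 1) * og g⁻¹) := by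
    rw [e2, e3, hD0, D_og_inv (hD k), og_mul μ g⁻¹]
    noncomm_ring
  rw [key]
  exact NI_mul_left _ (NI_mul_og_right hN (og_sub_one_mem hμN) g⁻¹)

lemma commNN_le_Hsub (hD : ∀ k, IsFoxDeriv J k (D k)) (hN : N.Normal) :
    ⁅N, N⁆ ≤ Hsub hD hN K := by
  rw [Subgroup.commutator_le]
  intro g hg h hh k _
  rw [commutatorElement_def]
  have e1 : og (g * h * g⁻¹ * h⁻¹) = og g * og (h * (g⁻¹ * h⁻¹)) := by
    rw [← og_mul]; congr 1; group
  have e2 : D k (og (g * h * g⁻¹ * h⁻¹)) =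
      D k (og g) * og (h * (g⁻¹ * h⁻¹)) + D k (og (h * (g⁻¹ * h⁻¹))) := by
    rw [e1, D_og_mul_left (hD k)]
  have e3 : D k (og (h * (g⁻¹ * h⁻¹))) =
      D k (og h) * og (g⁻¹ * h⁻¹) + D k (og (g⁻¹ * h⁻¹)) := D_og_mul (hD k) _ _
  have e4 : D k (og (g⁻¹ * h⁻¹)) = D k (og g⁻¹) * og h⁻¹ + D k (og h⁻¹) := D_og_mul (hD k) _ _
  have key : D k (og (g * h * g⁻¹ * h⁻¹)) =
      D k (og g) * ((og h - 1) * (og (g⁻¹ * h⁻¹))) +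
        D k (og h) * ((og g⁻¹ - 1) * og h⁻¹) := by
    rw [e2, e3, e4, D_og_inv (hD k), D_og_inv (hD k)]
    have c1 : og (h * (g⁻¹ * h⁻¹)) = og h * og (g⁻¹ * h⁻¹) := og_mul _ _
    have c2 : og (g⁻¹ * h⁻¹) = og g⁻¹ * og h⁻¹ := og_mul _ _
    rw [c1, c2]
    noncomm_ring
  rw [key]
  refine Submodule.add_mem _ ?_ ?_
  · exact NI_mul_left _ (NI_mul_og_right hN (og_sub_one_mem hh) _)
  · exact NI_mul_left _ (NI_mul_og_right hN (og_sub_one_mem (inv_mem hg)) _)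

end Backward

section Coset
variable (K : Set J) (N : Subgroup (FreeGroup J))

/-- the double coset setoid: `f ~ f'` iff `f' = a * f * m` with `a ∈ F_K`, `m ∈ N`. -/
def dsetoid : Setoid (FreeGroup J) where
  r f f' := ∃ a ∈ Subgroup.closure (FreeGroup.of '' K), ∃ m ∈ N, f' = a * f * m
  iseqv := by
    constructor
    · exact fun f => ⟨1, one_mem _, 1, one_mem _, by group⟩
    · rintro f f' ⟨a, ha, m, hm, rfl⟩
      exact ⟨a⁻¹, inv_mem ha, m⁻¹, inv_mem hm, by group⟩
    · rintro f f' f'' ⟨a, ha, m, hm, rfl⟩ ⟨a', ha', m', hm', rfl⟩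
      exact ⟨a' * a, mul_mem ha' ha, m * m', mul_mem hm hm', by group⟩

def cls : FreeGroup J → Quotient (dsetoid K N) := Quotient.mk (dsetoid K N)

variable {K N}

lemma cls_mul_left {a : FreeGroup J} (ha : a ∈ Subgroup.closure (FreeGroup.of '' K))
    (f : FreeGroup J) : cls K N (a * f) = cls K N f := by
  have h : ∃ b ∈ Subgroup.closure (FreeGroup.of '' K), ∃ m ∈ N, a * f = b * f * m :=
    ⟨a, ha, 1, one_mem _, by group⟩
  exact (Quotient.sound h).symm

lemma cls_mul_right {m : FreeGroup J} (hm : m ∈ N) (f : FreeGroup J) :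
    cls K N (f * m) = cls K N f := by
  have h : ∃ b ∈ Subgroup.closure (FreeGroup.of '' K), ∃ m' ∈ N, f * m = b * f * m' :=
    ⟨1, one_mem _, m, hm, by group⟩
  exact (Quotient.sound h).symm

/-- `Finsupp.mapDomain` repackaged on the monoid algebra. -/
noncomputable def MD (g : FreeGroup J → FreeGroup J) :
    MonoidAlgebra ℤ (FreeGroup J) → MonoidAlgebra ℤ (FreeGroup J) :=
  fun x => MonoidAlgebra.mapDomain g x

lemma cls_out_decomp (f : FreeGroup J) :
    ∃ p : FreeGroup J × FreeGroup J, p.1 ∈ Subgroup.closure (FreeGroup.of '' K) ∧ p.2 ∈ N ∧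
      f = p.1 * (cls K N f).out * p.2 := by
  have h := Quotient.mk_out (s := dsetoid K N) f
  obtain ⟨a, ha, m, hm, he⟩ := h
  exact ⟨(a, m), ha, hm, by rw [cls]; exact he⟩

variable (K N)

noncomputable def pfn (f : FreeGroup J) : FreeGroup J × FreeGroup J :=
  (cls_out_decomp (K := K) (N := N) f).choose

noncomputable def rmap (f : FreeGroup J) : FreeGroup J := (pfn K N f).1 * (cls K N f).out

variable {K N}

lemma pfn_spec (f : FreeGroup J) :
    (pfn K N f).1 ∈ Subgroup.closure (FreeGroup.of '' K) ∧ (pfn K N f).2 ∈ N ∧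
      f = rmap K N f * (pfn K N f).2 := by
  have h := (cls_out_decomp (K := K) (N := N) f).choose_spec
  exact ⟨h.1, h.2.1, by rw [rmap, mul_assoc]; rw [mul_assoc] at h; exact h.2.2⟩

lemma mapDomain_sub {β : Type} (g : FreeGroup J → β) (x y : MonoidAlgebra ℤ (FreeGroup J)) :
    MonoidAlgebra.mapDomain g (x - y) = MonoidAlgebra.mapDomain g x - MonoidAlgebra.mapDomain g y :=
  map_sub (MonoidAlgebra.mapDomainLinearMap (R := ℤ) (S := ℤ) g) x y

lemma mapDomain_finsum {β ι : Type} (g : FreeGroup J → β) (t : Finset ι)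
    (F : ι → MonoidAlgebra ℤ (FreeGroup J)) :
    MonoidAlgebra.mapDomain g (∑ i ∈ t, F i) = ∑ i ∈ t, MonoidAlgebra.mapDomain g (F i) :=
  map_sum (MonoidAlgebra.mapDomainLinearMap (R := ℤ) (S := ℤ) g) F t

lemma MA_mapDomain_comp {β γ : Type} (f : FreeGroup J → β) (g : β → γ)
    (x : MonoidAlgebra ℤ (FreeGroup J)) :
    MonoidAlgebra.mapDomain (g ∘ f) x = MonoidAlgebra.mapDomain g (MonoidAlgebra.mapDomain f x) :=
  MonoidAlgebra.coeff_injective Finsupp.mapDomain_comp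

lemma MA_mapDomain_id (x : MonoidAlgebra ℤ (FreeGroup J)) : MonoidAlgebra.mapDomain id x = x :=
  MonoidAlgebra.coeff_injective Finsupp.mapDomain_id

lemma cls_rmap (f : FreeGroup J) : cls K N (rmap K N f) = cls K N f := by
  obtain ⟨_, h2, h3⟩ := pfn_spec (K := K) (N := N) f
  conv_rhs => rw [h3]
  rw [cls_mul_right h2]

lemma MD_og (g : FreeGroup J → FreeGroup J) (f : FreeGroup J) : MD g (og f) = og (g f) := by
  rw [MD, og_eq_single, og_eq_single]
  exact MonoidAlgebra.mapDomain_single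

lemma MD_zero (g : FreeGroup J → FreeGroup J) : MD g 0 = 0 := MonoidAlgebra.mapDomain_zero g

lemma MD_add (g : FreeGroup J → FreeGroup J) (x y) : MD g (x + y) = MD g x + MD g y :=
  MonoidAlgebra.mapDomain_add g x y

lemma MD_smul (g : FreeGroup J → FreeGroup J) (c : ℤ) (x) : MD g (c • x) = c • MD g x :=
  MonoidAlgebra.mapDomain_smul g c x

lemma MD_sub (g : FreeGroup J → FreeGroup J) (x y) : MD g (x - y) = MD g x - MD g y := by
  have h1 : x - y = x + (-1 : ℤ) • y := by rw [neg_one_smul]; abel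
  rw [h1, MD_add, MD_smul, neg_one_smul]
  abel

lemma MD_sum {ι : Type} (g : FreeGroup J → FreeGroup J) (t : Finset ι)
    (F : ι → MonoidAlgebra ℤ (FreeGroup J)) :
    MD g (∑ i ∈ t, F i) = ∑ i ∈ t, MD g (F i) := by
  classical
  induction t using Finset.induction_on with
  | empty => simp [MD_zero]
  | insert _ _ ha ih => rw [Finset.sum_insert ha, Finset.sum_insert ha, MD_add, ih]

lemma sub_MD_rmap_mem (x : MonoidAlgebra ℤ (FreeGroup J)) :
    x - MD (rmap K N) x ∈ NI N := by
  induction x using og_induction with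
  | h0 => rw [MD_zero, sub_zero]; exact Submodule.zero_mem _
  | hog f =>
    obtain ⟨_, h2, h3⟩ := pfn_spec (K := K) (N := N) f
    have e : og f - og (rmap K N f) = og (rmap K N f) * (og ((pfn K N f).2) - 1) := by
      rw [mul_sub, mul_one, ← og_mul, ← h3]
    rw [MD_og, e]
    exact NI_mul_left _ (og_sub_one_mem h2)
  | hadd x y hx hy =>
    rw [MD_add]
    have e : x + y - (MD (rmap K N) x + MD (rmap K N) y) =
        (x - MD (rmap K N) x) + (y - MD (rmap K N) y) := by abel
    rw [e]
    exact Submodule.add_mem _ hx hy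
  | hsmul c x hx =>
    rw [MD_smul, ← smul_sub]
    exact Submodule.smul_of_tower_mem _ c hx

lemma NI_zsmul {x : MonoidAlgebra ℤ (FreeGroup J)} (c : ℤ) (hx : x ∈ NI N) : c • x ∈ NI N :=
  Submodule.smul_of_tower_mem _ c hx

/-- `mapDomain cls` kills `𝔑`. -/
lemma mapDomain_cls_NI {y : MonoidAlgebra ℤ (FreeGroup J)} (hy : y ∈ NI N)
    (x : MonoidAlgebra ℤ (FreeGroup J)) : MonoidAlgebra.mapDomain (cls K N) (x * y) = 0 := by
  induction hy using Submodule.span_induction generalizing x with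
  | mem t ht =>
    obtain ⟨nn, hn, rfl⟩ := ht
    induction x using og_induction with
    | h0 => rw [zero_mul, MonoidAlgebra.mapDomain_zero]
    | hog f =>
      rw [mul_sub, mul_one, ← og_mul, og_eq_single, og_eq_single, mapDomain_sub,
        MonoidAlgebra.mapDomain_single, MonoidAlgebra.mapDomain_single, cls_mul_right hn, sub_self]
    | hadd x₁ x₂ h1 h2 => rw [add_mul, MonoidAlgebra.mapDomain_add, h1, h2, add_zero]
    | hsmul c x₁ h1 => rw [smul_mul_assoc, MonoidAlgebra.mapDomain_smul, h1, smul_zero]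
  | zero => rw [mul_zero, MonoidAlgebra.mapDomain_zero]
  | add a b _ _ ha hb => rw [mul_add, MonoidAlgebra.mapDomain_add, ha, hb, add_zero]
  | smul a t _ ht => rw [smul_eq_mul, ← mul_assoc]; exact ht _

lemma mapDomain_cls_FK {a : FreeGroup J} (ha : a ∈ Subgroup.closure (FreeGroup.of '' K))
    (x : MonoidAlgebra ℤ (FreeGroup J)) :
    MonoidAlgebra.mapDomain (cls K N) (og a * x) = MonoidAlgebra.mapDomain (cls K N) x := by
  induction x using og_induction with
  | h0 => rw [mul_zero]
  | hog f =>
    rw [← og_mul, og_eq_single, og_eq_single, MonoidAlgebra.mapDomain_single,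
      MonoidAlgebra.mapDomain_single, cls_mul_left ha]
  | hadd x₁ x₂ h1 h2 => rw [mul_add, MonoidAlgebra.mapDomain_add, MonoidAlgebra.mapDomain_add, h1, h2]
  | hsmul c x₁ h1 =>
    rw [mul_smul_comm, MonoidAlgebra.mapDomain_smul, MonoidAlgebra.mapDomain_smul, h1]

/-- Step 1: if the exterior Fox derivatives of `v` lie in `𝔑` then `v ∈ F_K · N`. -/
lemma step1 {D : J → MonoidAlgebra ℤ (FreeGroup J) → MonoidAlgebra ℤ (FreeGroup J)}
    (hD : ∀ k, IsFoxDeriv J k (D k)) {v : FreeGroup J}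
    (hv : ∀ k ∉ K, D k (og v) ∈ NI N) :
    ∃ a ∈ Subgroup.closure (FreeGroup.of '' K), ∃ m ∈ N, v = a * m := by
  classical
  obtain ⟨s, _, e⟩ := FF hD v
  have hterm : ∀ j ∈ s, MonoidAlgebra.mapDomain (cls K N)
      ((og (FreeGroup.of j) - 1) * D j (og v)) = 0 := by
    intro j _
    by_cases hj : j ∈ K
    · rw [sub_mul, one_mul, mapDomain_sub,
        mapDomain_cls_FK (Subgroup.subset_closure ⟨j, hj, rfl⟩), sub_self]
    · have hmem : (og (FreeGroup.of j) - 1) * D j (og v) ∈ NI N :=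
        NI_mul_left _ (hv j hj)
      have := mapDomain_cls_NI (K := K) hmem 1
      rwa [one_mul] at this
  have e2 : MonoidAlgebra.mapDomain (cls K N) (og v - 1) = 0 := by
    rw [e, mapDomain_finsum]
    exact Finset.sum_eq_zero hterm
  rw [mapDomain_sub] at e2
  have e3 : MonoidAlgebra.mapDomain (cls K N) (og v) = MonoidAlgebra.mapDomain (cls K N) (og 1) := by
    rw [sub_eq_zero] at e2
    rw [e2, og_one]
  rw [og_eq_single, og_eq_single, MonoidAlgebra.mapDomain_single, MonoidAlgebra.mapDomain_single] at e3
  rw [← MonoidAlgebra.coeff_inj, MonoidAlgebra.coeff_single, MonoidAlgebra.coeff_single] at e3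
  have e4 : cls K N v = cls K N 1 := by
    rcases (Finsupp.single_eq_single_iff _ _ _ _).mp e3 with ⟨h, _⟩ | ⟨h, _⟩
    · exact h
    · exact absurd h one_ne_zero
  have e5 := Quotient.exact e4
  obtain ⟨a, ha, m, hm, hrel⟩ := e5
  refine ⟨a⁻¹, inv_mem ha, m⁻¹, inv_mem hm, ?_⟩
  have h9 : a * v * m = 1 := hrel.symm
  calc v = a⁻¹ * (a * v * m) * m⁻¹ := by group
    _ = a⁻¹ * m⁻¹ := by rw [h9]; group

end Coset

section Filter
attribute [local instance] Classical.propDecidable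
variable {K : Set J} {N : Subgroup (FreeGroup J)}

noncomputable def Efil (ω : Quotient (dsetoid K N)) :
    MonoidAlgebra ℤ (FreeGroup J) → MonoidAlgebra ℤ (FreeGroup J) :=
  fun x => MonoidAlgebra.ofCoeff (Finsupp.filter (fun f => cls K N f = ω) x.coeff)

lemma Efil_apply (ω : Quotient (dsetoid K N)) (x : MonoidAlgebra ℤ (FreeGroup J))
    (f : FreeGroup J) : (Efil ω x).coeff f = if cls K N f = ω then x.coeff f else 0 :=
  Finsupp.filter_apply _ _ _

lemma Efil_zero (ω : Quotient (dsetoid K N)) : Efil (K := K) (N := N) ω 0 = 0 := by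
  ext f; rw [Efil_apply]; simp

lemma Efil_add (ω : Quotient (dsetoid K N)) (x y : MonoidAlgebra ℤ (FreeGroup J)) :
    Efil ω (x + y) = Efil ω x + Efil ω y := by
  ext f
  simp only [Efil_apply, MonoidAlgebra.coeff_add, Finsupp.add_apply]
  split_ifs <;> simp

lemma Efil_smul (ω : Quotient (dsetoid K N)) (c : ℤ) (x : MonoidAlgebra ℤ (FreeGroup J)) :
    Efil ω (c • x) = c • Efil ω x := by
  ext f
  simp only [Efil_apply, MonoidAlgebra.coeff_smul, Finsupp.smul_apply]
  split_ifs <;> simp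

lemma Efil_sub (ω : Quotient (dsetoid K N)) (x y : MonoidAlgebra ℤ (FreeGroup J)) :
    Efil ω (x - y) = Efil ω x - Efil ω y := by
  have h1 : x - y = x + (-1 : ℤ) • y := by rw [neg_one_smul]; abel
  rw [h1, Efil_add, Efil_smul, neg_one_smul]
  abel

lemma Efil_sum {ι : Type} (ω : Quotient (dsetoid K N)) (t : Finset ι)
    (F : ι → MonoidAlgebra ℤ (FreeGroup J)) :
    Efil ω (∑ i ∈ t, F i) = ∑ i ∈ t, Efil ω (F i) := by
  classical
  induction t using Finset.induction_on with
  | empty => simp [Efil_zero]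
  | insert _ _ ha ih => rw [Finset.sum_insert ha, Finset.sum_insert ha, Efil_add, ih]

lemma Efil_og (ω : Quotient (dsetoid K N)) (f : FreeGroup J) :
    Efil ω (og f) = if cls K N f = ω then og f else 0 := by
  ext a
  rw [Efil_apply]
  by_cases hfa : f = a
  · subst hfa
    split_ifs with h1 <;> simp [og_eq_single, MonoidAlgebra.coeff_single_apply]
  · have h2 : (og f).coeff a = 0 := by
      rw [og_eq_single, MonoidAlgebra.coeff_single_apply, if_neg hfa]
    split_ifs <;> simp [h2]

lemma Efil_og_mul_left (ω : Quotient (dsetoid K N)) {a : FreeGroup J}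
    (ha : a ∈ Subgroup.closure (FreeGroup.of '' K)) (x : MonoidAlgebra ℤ (FreeGroup J)) :
    Efil ω (og a * x) = og a * Efil ω x := by
  induction x using og_induction with
  | h0 => rw [mul_zero, Efil_zero, mul_zero]
  | hog f =>
    rw [← og_mul, Efil_og, Efil_og, cls_mul_left ha]
    split_ifs
    · rw [og_mul]
    · rw [mul_zero]
  | hadd x y hx hy => rw [mul_add, Efil_add, Efil_add, hx, hy, mul_add]
  | hsmul c x hx => rw [mul_smul_comm, Efil_smul, Efil_smul, hx, mul_smul_comm]

lemma Efil_NI {y : MonoidAlgebra ℤ (FreeGroup J)} (hy : y ∈ NI N)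
    (ω : Quotient (dsetoid K N)) (x : MonoidAlgebra ℤ (FreeGroup J)) :
    Efil ω (x * y) ∈ NI N := by
  induction hy using Submodule.span_induction generalizing x with
  | mem t ht =>
    obtain ⟨nn, hn, rfl⟩ := ht
    induction x using og_induction with
    | h0 => rw [zero_mul, Efil_zero]; exact Submodule.zero_mem _
    | hog f =>
      have e : og f * (og nn - 1) = og (f * nn) - og f := by
        rw [mul_sub, mul_one, og_mul]
      rw [e, Efil_sub, Efil_og, Efil_og, cls_mul_right hn]
      split_ifs
      · rw [← e]; exact NI_mul_left _ (og_sub_one_mem hn)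
      · rw [sub_zero]; exact Submodule.zero_mem _
    | hadd x₁ x₂ h1 h2 => rw [add_mul, Efil_add]; exact Submodule.add_mem _ h1 h2
    | hsmul c x₁ h1 => rw [smul_mul_assoc, Efil_smul]; exact NI_zsmul c h1
  | zero => rw [mul_zero, Efil_zero]; exact Submodule.zero_mem _
  | add a b _ _ ha hb => rw [mul_add, Efil_add]; exact Submodule.add_mem _ (ha x) (hb x)
  | smul a t _ ht => rw [smul_eq_mul, ← mul_assoc]; exact ht _

lemma mul_og_mul_inv_cancel (x : MonoidAlgebra ℤ (FreeGroup J)) (t : FreeGroup J) :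
    x * og t * og t⁻¹ = x := by
  rw [mul_assoc, ← og_mul, mul_inv_cancel, og_one, mul_one]

end Filter

section Spans
attribute [local instance] Classical.propDecidable
variable (K : Set J) (N : Subgroup (FreeGroup J))

noncomputable def RK : Submodule ℤ (MonoidAlgebra ℤ (FreeGroup J)) :=
  Submodule.span ℤ (og '' ((Subgroup.closure (FreeGroup.of '' K) : Subgroup (FreeGroup J)) :
    Set (FreeGroup J)))

noncomputable def P2 : Submodule ℤ (MonoidAlgebra ℤ (FreeGroup J)) :=
  Submodule.span ℤ {x | ∃ a ∈ Subgroup.closure (FreeGroup.of '' K),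
    ∃ m ∈ (Subgroup.closure (FreeGroup.of '' K) ⊓ N : Subgroup (FreeGroup J)),
      x = og a * (og m - 1)}

variable {K N}

lemma og_mem_RK {a : FreeGroup J} (ha : a ∈ Subgroup.closure (FreeGroup.of '' K)) :
    og a ∈ RK K := Submodule.subset_span ⟨a, ha, rfl⟩

lemma one_mem_RK : (1 : MonoidAlgebra ℤ (FreeGroup J)) ∈ RK K := by
  rw [← og_one]; exact og_mem_RK (one_mem _)

lemma RK_mul {x y : MonoidAlgebra ℤ (FreeGroup J)} (hx : x ∈ RK K) (hy : y ∈ RK K) :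
    x * y ∈ RK K := by
  induction hx using Submodule.span_induction generalizing y with
  | mem t ht =>
    obtain ⟨a, ha, rfl⟩ := ht
    induction hy using Submodule.span_induction with
    | mem u hu =>
      obtain ⟨b, hb, rfl⟩ := hu
      rw [← og_mul]
      exact og_mem_RK (mul_mem ha hb)
    | zero => rw [mul_zero]; exact Submodule.zero_mem _
    | add u v _ _ hu hv => rw [mul_add]; exact Submodule.add_mem _ hu hv
    | smul c u _ hu => rw [mul_smul_comm]; exact Submodule.smul_mem _ _ hu
  | zero => rw [zero_mul]; exact Submodule.zero_mem _
  | add u v _ _ hu hv => rw [add_mul]; exact Submodule.add_mem _ (hu hy) (hv hy)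
  | smul c u _ hu => rw [smul_mul_assoc]; exact Submodule.smul_mem _ _ (hu hy)

/-- `mapDomain mk` kills `𝔑`. -/
lemma NI_mapDomain_mk {y : MonoidAlgebra ℤ (FreeGroup J)} (hy : y ∈ NI N)
    (x : MonoidAlgebra ℤ (FreeGroup J)) :
    MonoidAlgebra.mapDomain (QuotientGroup.mk (s := N)) (x * y) = 0 := by
  induction hy using Submodule.span_induction generalizing x with
  | mem t ht =>
    obtain ⟨nn, hn, rfl⟩ := ht
    induction x using og_induction with
    | h0 => rw [zero_mul, MonoidAlgebra.mapDomain_zero]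
    | hog f =>
      have e : og f * (og nn - 1) = og (f * nn) - og f := by
        rw [mul_sub, mul_one, og_mul]
      have hmk : (QuotientGroup.mk (f * nn) : FreeGroup J ⧸ N) = QuotientGroup.mk f := by
        rw [QuotientGroup.eq]
        simpa using inv_mem hn
      rw [e, og_eq_single, og_eq_single, mapDomain_sub, MonoidAlgebra.mapDomain_single,
        MonoidAlgebra.mapDomain_single, hmk, sub_self]
    | hadd x₁ x₂ h1 h2 => rw [add_mul, MonoidAlgebra.mapDomain_add, h1, h2, add_zero]
    | hsmul c x₁ h1 => rw [smul_mul_assoc, MonoidAlgebra.mapDomain_smul, h1, smul_zero]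
  | zero => rw [mul_zero, MonoidAlgebra.mapDomain_zero]
  | add a b _ _ ha hb => rw [mul_add, MonoidAlgebra.mapDomain_add, ha, hb, add_zero]
  | smul a t _ ht => rw [smul_eq_mul, ← mul_assoc]; exact ht _

variable (K N)

noncomputable def hrep : FreeGroup J ⧸ N → FreeGroup J := fun q =>
  if h : ∃ a, a ∈ Subgroup.closure (FreeGroup.of '' K) ∧
      (QuotientGroup.mk a : FreeGroup J ⧸ N) = q then h.choose else 1

variable {K N}

lemma hrep_spec {a : FreeGroup J} (ha : a ∈ Subgroup.closure (FreeGroup.of '' K)) :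
    hrep K N (QuotientGroup.mk a) ∈ Subgroup.closure (FreeGroup.of '' K) ∧
      (QuotientGroup.mk (hrep K N (QuotientGroup.mk a)) : FreeGroup J ⧸ N) =
        QuotientGroup.mk a := by
  have hex : ∃ b, b ∈ Subgroup.closure (FreeGroup.of '' K) ∧
      (QuotientGroup.mk b : FreeGroup J ⧸ N) = QuotientGroup.mk a := ⟨a, ha, rfl⟩
  rw [hrep, dif_pos hex]
  exact ⟨hex.choose_spec.1, hex.choose_spec.2⟩

/-- Krasnikov's key lemma KL2 : `ℤ[F_K] ∩ 𝔑 ⊆ ℤ[F_K]·(N_K - 1)`. -/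
lemma RK_NI_mem_P2 {z : MonoidAlgebra ℤ (FreeGroup J)} (hz1 : z ∈ RK K)
    (hz2 : z ∈ NI N) : z ∈ P2 K N := by
  have h0 : MD (hrep K N ∘ QuotientGroup.mk) z = 0 := by
    have hmk : MonoidAlgebra.mapDomain (QuotientGroup.mk (s := N)) z = 0 := by
      have := NI_mapDomain_mk hz2 1
      rwa [one_mul] at this
    rw [MD, MA_mapDomain_comp, hmk, MonoidAlgebra.mapDomain_zero]
  have h1 : z - MD (hrep K N ∘ QuotientGroup.mk) z ∈ P2 K N := by
    clear h0 hz2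
    induction hz1 using Submodule.span_induction with
    | mem t ht =>
      obtain ⟨a, ha, rfl⟩ := ht
      rw [MD_og]
      have hsp := hrep_spec (N := N) ha
      set u := hrep K N (QuotientGroup.mk a) with hu
      have hmN : u⁻¹ * a ∈ N := QuotientGroup.eq.mp hsp.2
      have hmK : u⁻¹ * a ∈ Subgroup.closure (FreeGroup.of '' K) :=
        mul_mem (inv_mem hsp.1) ha
      have e : og a - og u = og u * (og (u⁻¹ * a) - 1) := by
        rw [mul_sub, mul_one, ← og_mul, mul_inv_cancel_left]
      rw [show (hrep K N ∘ QuotientGroup.mk) a = u from rfl, e]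
      exact Submodule.subset_span ⟨u, hsp.1, u⁻¹ * a, ⟨hmK, hmN⟩, rfl⟩
    | zero => rw [MD_zero, sub_zero]; exact Submodule.zero_mem _
    | add u v _ _ hu hv =>
      rw [MD_add]
      have e : u + v - (MD (hrep K N ∘ QuotientGroup.mk) u +
          MD (hrep K N ∘ QuotientGroup.mk) v) =
          (u - MD (hrep K N ∘ QuotientGroup.mk) u) +
            (v - MD (hrep K N ∘ QuotientGroup.mk) v) := by abel
      rw [e]
      exact Submodule.add_mem _ hu hv
    | smul c u _ hu =>
      rw [MD_smul, ← smul_sub]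
      exact Submodule.smul_mem _ _ hu
  rw [h0, sub_zero] at h1
  exact h1

/-- Krasnikov's key lemma KL3 : elements of `P2` are Fox-congruent to elements of `N_K`. -/
lemma P2_D {D : J → MonoidAlgebra ℤ (FreeGroup J) → MonoidAlgebra ℤ (FreeGroup J)}
    (hD : ∀ k, IsFoxDeriv J k (D k)) {z : MonoidAlgebra ℤ (FreeGroup J)}
    (hz : z ∈ P2 K N) :
    ∃ μ ∈ (Subgroup.closure (FreeGroup.of '' K) ⊓ N : Subgroup (FreeGroup J)),
      ∀ i, D i z - D i (og μ) ∈ NI N := by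
  induction hz using Submodule.span_induction with
  | mem t ht =>
    obtain ⟨a, ha, m, hm, rfl⟩ := ht
    refine ⟨m, hm, fun i => ?_⟩
    have e1 : og a * (og m - 1) = og a * og m - og a := by rw [mul_sub, mul_one]
    have e2 : D i (og a * (og m - 1)) - D i (og m) = D i (og a) * (og m - 1) := by
      rw [e1, D_sub (hD i), ← og_mul, D_og_mul (hD i)]
      noncomm_ring
    rw [e2]
    exact NI_mul_left _ (og_sub_one_mem hm.2)
  | zero =>
    refine ⟨1, one_mem _, fun i => ?_⟩
    rw [D_zero (hD i), og_one, D_one (hD i), sub_zero]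
    exact Submodule.zero_mem _
  | add u v _ _ hu hv =>
    obtain ⟨μ₁, hμ₁, h1⟩ := hu
    obtain ⟨μ₂, hμ₂, h2⟩ := hv
    refine ⟨μ₁ * μ₂, mul_mem hμ₁ hμ₂, fun i => ?_⟩
    have hc := Dcong_mul (hD i) μ₁ hμ₂.2
    have e : D i (u + v) - D i (og (μ₁ * μ₂)) =
        (D i u - D i (og μ₁)) + (D i v - D i (og μ₂)) -
          (D i (og (μ₁ * μ₂)) - (D i (og μ₁) + D i (og μ₂))) := by
      rw [D_add (hD i)]; abel
    rw [e]
    exact Submodule.sub_mem _ (Submodule.add_mem _ (h1 i) (h2 i)) hc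
  | smul c u _ hu =>
    obtain ⟨μ, hμ, h1⟩ := hu
    refine ⟨μ ^ c, zpow_mem hμ c, fun i => ?_⟩
    have hc := Dcong_zpow (hD i) hμ.2 c
    have e : D i (c • u) - D i (og (μ ^ c)) =
        c • (D i u - D i (og μ)) - (D i (og (μ ^ c)) - c • D i (og μ)) := by
      rw [D_zsmul (hD i), smul_sub]; abel
    rw [e]
    exact Submodule.sub_mem _ (NI_zsmul c (h1 i)) hc

end Spans

section Crux
attribute [local instance] Classical.propDecidable
variable {K : Set J} {N : Subgroup (FreeGroup J)}
  {D : J → MonoidAlgebra ℤ (FreeGroup J) → MonoidAlgebra ℤ (FreeGroup J)}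

lemma MD_eq (g : FreeGroup J → FreeGroup J) (x : MonoidAlgebra ℤ (FreeGroup J)) :
    MD g x = MonoidAlgebra.mapDomain g x := rfl

lemma MD_support (g : FreeGroup J → FreeGroup J) (x : MonoidAlgebra ℤ (FreeGroup J)) :
    (MD g x).coeff.support ⊆ x.coeff.support.image g := Finsupp.mapDomain_support

lemma D_finsum {k : J} {Dk} (h : IsFoxDeriv J k Dk) {ι : Type} (t : Finset ι)
    (F : ι → MonoidAlgebra ℤ (FreeGroup J)) :
    Dk (∑ i ∈ t, F i) = ∑ i ∈ t, Dk (F i) := by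
  classical
  induction t using Finset.induction_on with
  | empty => simpa using D_zero h
  | insert _ _ ha ih => rw [Finset.sum_insert ha, Finset.sum_insert ha, D_add h, ih]

lemma D_retract {k : J} {Dk} (h : IsFoxDeriv J k Dk) (j : J)
    (u : MonoidAlgebra ℤ (FreeGroup J)) :
    Dk ((og (FreeGroup.of j) - 1) * u) = if k = j then u else 0 := by
  rw [sub_mul, one_mul, D_sub h, D_og_mul_left h, D_gen h]
  split_ifs
  · rw [one_mul]; abel
  · rw [zero_mul]; abel

lemma sum_Efil (x : MonoidAlgebra ℤ (FreeGroup J)) (O : Finset (Quotient (dsetoid K N)))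
    (hsupp : ∀ f ∈ x.coeff.support, cls K N f ∈ O) : ∑ ω ∈ O, Efil ω x = x := by
  ext a
  rw [MonoidAlgebra.coeff_sum, Finsupp.finset_sum_apply]
  have h1 : ∀ ω ∈ O, (Efil ω x).coeff a = if cls K N a = ω then x.coeff a else 0 :=
    fun ω _ => Efil_apply ω x a
  rw [Finset.sum_congr rfl h1, Finset.sum_ite_eq]
  split_ifs with h2
  · rfl
  · by_cases h3 : a ∈ x.coeff.support
    · exact absurd (hsupp a h3) h2
    · exact (Finsupp.notMem_support_iff.mp h3).symm

/-- The heart of Krasnikov's theorem. -/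
lemma crux (hD : ∀ k, IsFoxDeriv J k (D k)) (hN : N.Normal) {n : FreeGroup J}
    (hnN : n ∈ N) (hn : ∀ k ∉ K, D k (og n) ∈ NI N) :
    ∃ w ∈ Subgroup.normalClosure
      (((Subgroup.closure (FreeGroup.of '' K) ⊓ N) : Subgroup (FreeGroup J)) :
        Set (FreeGroup J)),
      ∀ j, D j (og n) - D j (og w) ∈ NI N := by
  obtain ⟨s, hs, e⟩ := FF hD n
  set sK : Finset J := s.filter (fun j => j ∈ K) with hsK
  have hX : ∑ j ∈ sK, (og (FreeGroup.of j) - 1) * D j (og n) ∈ NI N := by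
    have hsplit := Finset.sum_filter_add_sum_filter_not s (fun j => j ∈ K)
      (fun j => (og (FreeGroup.of j) - 1) * D j (og n))
    have e2 : ∑ j ∈ sK, (og (FreeGroup.of j) - 1) * D j (og n) =
        (og n - 1) - ∑ j ∈ s.filter (fun j => ¬ j ∈ K),
          (og (FreeGroup.of j) - 1) * D j (og n) := by
      rw [e, ← hsplit, hsK]; abel
    rw [e2]
    refine Submodule.sub_mem _ (og_sub_one_mem hnN) (Submodule.sum_mem _ ?_)
    intro j hj
    rw [Finset.mem_filter] at hj
    exact NI_mul_left _ (hn j hj.2)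
  set x' : J → MonoidAlgebra ℤ (FreeGroup J) := fun j => MD (rmap K N) (D j (og n)) with hx'def
  have hx' : ∀ j, D j (og n) - x' j ∈ NI N := fun j => sub_MD_rmap_mem _
  have hX' : ∑ j ∈ sK, (og (FreeGroup.of j) - 1) * x' j ∈ NI N := by
    have e2 : ∑ j ∈ sK, (og (FreeGroup.of j) - 1) * x' j =
        (∑ j ∈ sK, (og (FreeGroup.of j) - 1) * D j (og n)) -
          ∑ j ∈ sK, (og (FreeGroup.of j) - 1) * (D j (og n) - x' j) := by
      rw [← Finset.sum_sub_distrib]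
      refine Finset.sum_congr rfl (fun j _ => ?_)
      noncomm_ring
    rw [e2]
    exact Submodule.sub_mem _ hX
      (Submodule.sum_mem _ (fun j _ => NI_mul_left _ (hx' j)))
  set O : Finset (Quotient (dsetoid K N)) :=
    sK.biUnion (fun j => (x' j).coeff.support.image (cls K N)) with hO
  set y : J → Quotient (dsetoid K N) → MonoidAlgebra ℤ (FreeGroup J) :=
    fun j ω => MD (· * (ω.out)⁻¹) (Efil ω (x' j)) with hy
  have hyEq : ∀ j ω, y j ω * og ω.out = Efil ω (x' j) := by
    intro j ω
    have hyy : y j ω = MD (· * (ω.out)⁻¹) (Efil ω (x' j)) := rfl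
    rw [hyy, mul_og_eq_mapDomain, MD_eq, ← MA_mapDomain_comp]
    have hid : ((· * ω.out) ∘ (· * (ω.out)⁻¹)) = (id : FreeGroup J → FreeGroup J) := by
      funext u; simp
    rw [hid, MA_mapDomain_id]
  have hEX' : ∀ ω, Efil ω (∑ j ∈ sK, (og (FreeGroup.of j) - 1) * x' j) =
      (∑ j ∈ sK, (og (FreeGroup.of j) - 1) * y j ω) * og ω.out := by
    intro ω
    rw [Efil_sum, Finset.sum_mul]
    refine Finset.sum_congr rfl (fun j hj => ?_)
    have hjK : j ∈ K := by
      rw [hsK] at hj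
      exact (Finset.mem_filter.mp hj).2
    have hgen : FreeGroup.of j ∈ Subgroup.closure (FreeGroup.of '' K) :=
      Subgroup.subset_closure ⟨j, hjK, rfl⟩
    have e3 : (og (FreeGroup.of j) - 1) * x' j =
        og (FreeGroup.of j) * x' j - x' j := by noncomm_ring
    calc Efil ω ((og (FreeGroup.of j) - 1) * x' j)
        = og (FreeGroup.of j) * Efil ω (x' j) - Efil ω (x' j) := by
          rw [e3, Efil_sub, Efil_og_mul_left ω hgen]
      _ = (og (FreeGroup.of j) - 1) * y j ω * og ω.out := by
          rw [← hyEq j ω]; noncomm_ring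
  set z : Quotient (dsetoid K N) → MonoidAlgebra ℤ (FreeGroup J) :=
    fun ω => ∑ j ∈ sK, (og (FreeGroup.of j) - 1) * y j ω with hz
  have hzNI : ∀ ω, z ω ∈ NI N := by
    intro ω
    have h1 : Efil ω (∑ j ∈ sK, (og (FreeGroup.of j) - 1) * x' j) ∈ NI N := by
      have h2 := Efil_NI hX' ω 1
      rwa [one_mul] at h2
    rw [hEX'] at h1
    have h3 := NI_mul_og_right hN h1 (ω.out)⁻¹
    rwa [mul_og_mul_inv_cancel] at h3
  have hyRK : ∀ j ω, y j ω ∈ RK K := by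
    intro j ω
    apply mem_span_og_of_support
    intro f hf
    have h1 := MD_support (· * (ω.out)⁻¹) (Efil ω (x' j)) hf
    rw [Finset.mem_image] at h1
    obtain ⟨f', hf', rfl⟩ := h1
    have h2 : (Efil ω (x' j)).coeff f' ≠ 0 := Finsupp.mem_support_iff.mp hf'
    rw [Efil_apply] at h2
    by_cases hcls : cls K N f' = ω
    · have h3 : (x' j).coeff f' ≠ 0 := by rwa [if_pos hcls] at h2
      have h4 : f' ∈ (x' j).coeff.support := Finsupp.mem_support_iff.mpr h3
      have h5 := MD_support (rmap K N) (D j (og n)) h4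
      rw [Finset.mem_image] at h5
      obtain ⟨f₀, _, rfl⟩ := h5
      have h6 : cls K N f₀ = ω := by rw [← cls_rmap f₀]; exact hcls
      have h7 : rmap K N f₀ * (ω.out)⁻¹ = (pfn K N f₀).1 := by
        rw [rmap, h6, mul_assoc, mul_inv_cancel, mul_one]
      rw [h7]
      exact (pfn_spec f₀).1
    · exact absurd (if_neg hcls) h2
  have hzRK : ∀ ω, z ω ∈ RK K := by
    intro ω
    refine Submodule.sum_mem _ (fun j hj => ?_)
    have hjK : j ∈ K := by rw [hsK] at hj; exact (Finset.mem_filter.mp hj).2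
    exact RK_mul (Submodule.sub_mem _
      (og_mem_RK (Subgroup.subset_closure ⟨j, hjK, rfl⟩)) one_mem_RK) (hyRK j ω)
  have hμex : ∀ ω, ∃ μ ∈ (Subgroup.closure (FreeGroup.of '' K) ⊓ N :
      Subgroup (FreeGroup J)), ∀ i, D i (z ω) - D i (og μ) ∈ NI N :=
    fun ω => P2_D hD (RK_NI_mem_P2 (hzRK ω) (hzNI ω))
  choose μ hμmem hμcong using hμex
  have hDz : ∀ i ω, D i (z ω) = if i ∈ sK then y i ω else 0 := by
    intro i ω
    rw [hz]
    simp only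
    rw [D_finsum (hD i)]
    have h1 : ∀ j ∈ sK, D i ((og (FreeGroup.of j) - 1) * y j ω) =
        if i = j then y j ω else 0 := fun j _ => D_retract (hD i) j (y j ω)
    rw [Finset.sum_congr rfl h1, Finset.sum_ite_eq]
  have hsupp_cls : ∀ j ∈ sK, ∀ f ∈ (x' j).coeff.support, cls K N f ∈ O := by
    intro j hj f hf
    rw [hO]
    exact Finset.mem_biUnion.mpr ⟨j, hj, Finset.mem_image_of_mem _ hf⟩
  have hPART : ∀ j ∈ sK, ∑ ω ∈ O, Efil ω (x' j) = x' j :=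
    fun j hj => sum_Efil _ _ (hsupp_cls j hj)
  set w : FreeGroup J := (O.toList.map (fun ω => (ω.out)⁻¹ * μ ω * ω.out)).prod with hw
  have hfacN : ∀ ω, (ω.out)⁻¹ * μ ω * ω.out ∈ N := by
    intro ω
    simpa using hN.conj_mem _ (hμmem ω).2 (ω.out)⁻¹
  have hwW : w ∈ Subgroup.normalClosure
      (((Subgroup.closure (FreeGroup.of '' K) ⊓ N) : Subgroup (FreeGroup J)) :
        Set (FreeGroup J)) := by
    rw [hw]
    refine Subgroup.list_prod_mem _ (fun m hm => ?_)
    rw [List.mem_map] at hm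
    obtain ⟨ω, _, rfl⟩ := hm
    have h1 := Subgroup.subset_normalClosure (s :=
      (((Subgroup.closure (FreeGroup.of '' K) ⊓ N) : Subgroup (FreeGroup J)) :
        Set (FreeGroup J))) (hμmem ω)
    have h2 := Subgroup.normalClosure_normal.conj_mem _ h1 (ω.out)⁻¹
    simpa using h2
  have hkey : ∀ i, D i (og w) - ∑ ω ∈ O, D i (z ω) * og ω.out ∈ NI N := by
    intro i
    have h1 := Dcong_list (hD i) (O.toList.map (fun ω => (ω.out)⁻¹ * μ ω * ω.out))
      (by intro m hm; rw [List.mem_map] at hm; obtain ⟨ω, _, rfl⟩ := hm; exact hfacN ω)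
    have h2 : ((O.toList.map (fun ω => (ω.out)⁻¹ * μ ω * ω.out)).map
        (fun m => D i (og m))).sum =
        ∑ ω ∈ O, D i (og ((ω.out)⁻¹ * μ ω * ω.out)) := by
      rw [List.map_map]
      exact Finset.sum_map_toList O _
    rw [h2, ← hw] at h1
    have h3 : ∀ ω ∈ O, D i (og ((ω.out)⁻¹ * μ ω * ω.out)) - D i (og (μ ω)) * og ω.out
        ∈ NI N := fun ω _ => Dcong_conj (hD i) hN (hμmem ω).2 ω.out
    have h4 : ∀ ω ∈ O, (D i (og (μ ω)) - D i (z ω)) * og ω.out ∈ NI N := by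
      intro ω _
      refine NI_mul_og_right hN ?_ ω.out
      have h5 := Submodule.neg_mem _ (hμcong ω i)
      rwa [neg_sub] at h5
    have e5 : D i (og w) - ∑ ω ∈ O, D i (z ω) * og ω.out =
        (D i (og w) - ∑ ω ∈ O, D i (og ((ω.out)⁻¹ * μ ω * ω.out)))
        + ∑ ω ∈ O, (D i (og ((ω.out)⁻¹ * μ ω * ω.out)) - D i (og (μ ω)) * og ω.out)
        + ∑ ω ∈ O, (D i (og (μ ω)) - D i (z ω)) * og ω.out := by
      have h6 : ∀ ω ∈ O, (D i (og (μ ω)) - D i (z ω)) * og ω.out =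
          D i (og (μ ω)) * og ω.out - D i (z ω) * og ω.out :=
        fun ω _ => by rw [sub_mul]
      rw [Finset.sum_congr rfl h6, Finset.sum_sub_distrib, Finset.sum_sub_distrib]
      abel
    rw [e5]
    exact Submodule.add_mem _ (Submodule.add_mem _ h1 (Submodule.sum_mem _ h3))
      (Submodule.sum_mem _ h4)
  refine ⟨w, hwW, fun j => ?_⟩
  by_cases hjsK : j ∈ sK
  · have hsum : ∑ ω ∈ O, D j (z ω) * og ω.out = x' j := by
      calc ∑ ω ∈ O, D j (z ω) * og ω.out = ∑ ω ∈ O, y j ω * og ω.out := by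
            refine Finset.sum_congr rfl (fun ω _ => ?_)
            rw [hDz j ω, if_pos hjsK]
        _ = ∑ ω ∈ O, Efil ω (x' j) := Finset.sum_congr rfl (fun ω _ => hyEq j ω)
        _ = x' j := hPART j hjsK
    have e6 : D j (og n) - D j (og w) = (D j (og n) - x' j) -
        (D j (og w) - ∑ ω ∈ O, D j (z ω) * og ω.out) := by
      rw [hsum]; abel
    rw [e6]
    exact Submodule.sub_mem _ (hx' j) (hkey j)
  · have hsum0 : ∑ ω ∈ O, D j (z ω) * og ω.out = 0 :=
      Finset.sum_eq_zero (fun ω _ => by rw [hDz j ω, if_neg hjsK, zero_mul])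
    have hDn : D j (og n) ∈ NI N := by
      by_cases hjK : j ∈ K
      · have hjs : j ∉ s := fun hc => hjsK (by rw [hsK]; exact Finset.mem_filter.mpr ⟨hc, hjK⟩)
        rw [hs j hjs]
        exact Submodule.zero_mem _
      · exact hn j hjK
    have hDw : D j (og w) ∈ NI N := by
      have h7 := hkey j
      rwa [hsum0, sub_zero] at h7
    exact Submodule.sub_mem _ hDn hDw

end Crux


section BackwardMem
variable {K : Set J} {N : Subgroup (FreeGroup J)}
  {D : J → MonoidAlgebra ℤ (FreeGroup J) → MonoidAlgebra ℤ (FreeGroup J)}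

lemma backward_mem (hD : ∀ k, IsFoxDeriv J k (D k)) (hN : N.Normal) {a b c : FreeGroup J}
    (ha : a ∈ Subgroup.closure (FreeGroup.of '' K))
    (hb : b ∈ Subgroup.normalClosure
      (((Subgroup.closure (FreeGroup.of '' K) ⊓ N) : Subgroup (FreeGroup J)) :
        Set (FreeGroup J)))
    (hc : c ∈ ⁅N, N⁆) : ∀ k ∉ K, D k (og (a * b * c)) ∈ NI N := by
  have h : a * b * c ∈ Hsub hD hN K :=
    mul_mem (mul_mem (FK_le_Hsub hD hN ha) (ncl_le_Hsub hD hN hb)) (commNN_le_Hsub hD hN hc)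
  exact h

end BackwardMem

theorem main (J : Type) [DecidableEq J]
    (D : J → MonoidAlgebra ℤ (FreeGroup J) → MonoidAlgebra ℤ (FreeGroup J))
    (hD : ∀ k, IsFoxDeriv J k (D k))
    (K : Set J) (FK : Subgroup (FreeGroup J))
    (hFK : FK = Subgroup.closure (FreeGroup.of '' K))
    (N : Subgroup (FreeGroup J)) (hN : N.Normal) (v : FreeGroup J) :
    (∀ k ∉ K, D k (MonoidAlgebra.of ℤ (FreeGroup J) v) ∈
        Submodule.span (MonoidAlgebra ℤ (FreeGroup J))
          ((fun n => MonoidAlgebra.of ℤ (FreeGroup J) n - 1) '' (N : Set (FreeGroup J)))) ↔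
      ∃ a ∈ FK, ∃ b ∈ Subgroup.normalClosure ((FK ⊓ N : Subgroup (FreeGroup J)) : Set (FreeGroup J)),
        ∃ c ∈ ⁅N, N⁆, v = a * b * c := by
  subst hFK
  show (∀ k ∉ K, D k (og v) ∈ NI N) ↔ _
  constructor
  · intro hv
    obtain ⟨a, haK, m, hmN, rfl⟩ := step1 hD hv
    have hm : ∀ k ∉ K, D k (og m) ∈ NI N := by
      intro k hk
      have h1 : og m = og a⁻¹ * og (a * m) := by
        rw [← og_mul, inv_mul_cancel_left]
      rw [h1, D_og_mul_left (hD k), D_FK_eq_zero (hD k) hk (inv_mem haK), zero_mul, zero_add]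
      exact hv k hk
    obtain ⟨w, hwW, hcong⟩ := crux hD hN hmN hm
    have hwN : w ∈ N := by
      haveI := hN
      exact Subgroup.normalClosure_le_normal
        (by exact_mod_cast (SetLike.coe_subset_coe.mpr inf_le_right)) hwW
    have hmw : ∀ j, D j (og (m * w⁻¹)) ∈ NI N := by
      intro j
      have e1 : D j (og (m * w⁻¹)) = (D j (og m) - D j (og w)) * og w⁻¹ := by
        rw [D_og_mul (hD j), D_og_inv (hD j)]
        noncomm_ring
      rw [e1]
      exact NI_mul_og_right hN (hcong j) w⁻¹
    have hcomm : m * w⁻¹ ∈ ⁅N, N⁆ :=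
      mem_commutator_of_D hD (mul_mem hmN (inv_mem hwN)) hmw
    haveI := hN
    refine ⟨a, haK, w, hwW, w⁻¹ * (m * w⁻¹) * w, ?_, ?_⟩
    · have h2 := (Subgroup.commutator_normal N N).conj_mem _ hcomm w⁻¹
      simpa using h2
    · group
  · rintro ⟨a, haK, b, hbW, c, hcC, rfl⟩
    exact backward_mem hD hN haK hbW hcC


end Kras


/-- Theorem of Krasnikov: `D_k(v) ≡ 0 mod ℤ[F](N−1)` for all `k ∈ J \ K` iff
`v ∈ F_K · (F_K ∩ N)^F · [N,N]`. -/
theorem fox_deriv_krasnikov (J : Type) [DecidableEq J]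
    (D : J → MonoidAlgebra ℤ (FreeGroup J) → MonoidAlgebra ℤ (FreeGroup J))
    (hD : ∀ k, IsFoxDeriv J k (D k))
    (K : Set J) (FK : Subgroup (FreeGroup J))
    (hFK : FK = Subgroup.closure (FreeGroup.of '' K))
    (N : Subgroup (FreeGroup J)) (hN : N.Normal) (v : FreeGroup J) :
    (∀ k ∉ K, D k (MonoidAlgebra.of ℤ (FreeGroup J) v) ∈
        Submodule.span (MonoidAlgebra ℤ (FreeGroup J))
          ((fun n => MonoidAlgebra.of ℤ (FreeGroup J) n - 1) '' (N : Set (FreeGroup J)))) ↔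
      ∃ a ∈ FK, ∃ b ∈ Subgroup.normalClosure ((FK ⊓ N : Subgroup (FreeGroup J)) : Set (FreeGroup J)),
        ∃ c ∈ ⁅N, N⁆, v = a * b * c :=
  Kras.main J D hD K FK hFK N hN v
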